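/- Let $\Omega\subset\mathbb{R}^N$ be open, $q\ge 1$, $u\in L^q(\Omega,\mathbb{R}^d)$, and $\varepsilon>0$. Let $Q_\varepsilon(x_1),\dots,Q_\varepsilon(x_m)$ be pairwise disjoint open cubes of side $\varepsilon$ contained in $\Omega$, with $m\le \varepsilon^{-(N-1)}$. Then $$\sum_{j=1}^m \varepsilon^{N-1}\Big(\frac{1}{\varepsilon^{2N}}\int_{Q_\varepsilon(x_j)}\int_{Q_\varepsilon(x_j)}|u(y)-u(x)|\,dy\,dx\Big)\ \le\ N^{\frac{N+1}{2q}}\Big(\int_\Omega\int_{B_{\varepsilon\sqrt N}(x)\cap\Omega}\frac{1}{(\varepsilon\sqrt N)^N}\,\frac{|u(y)-u(x)|^q}{|y-x|}\,dy\,dx\Big)^{1/q}.$$ -/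

import Mathlib

open MeasureTheory Metric Set Filter Topology
open scoped ENNReal

noncomputable section

private lemma holder1 {α : Type*} [MeasurableSpace α] (μ : Measure α) (f : α → ℝ≥0∞)
    (hf : AEMeasurable f μ) (q : ℝ) (hq : 1 ≤ q) :
    ∫⁻ a, f a ∂μ ≤ (μ Set.univ) ^ (1 - 1/q) * (∫⁻ a, f a ^ q ∂μ) ^ (1/q) := by
  rcases eq_or_lt_of_le hq with h1 | h1
  · simp [← h1]
  · have hcon : q.HolderConjugate (q/(q-1)) := Real.HolderConjugate.conjExponent h1
    have := ENNReal.lintegral_mul_le_Lp_mul_Lq μ hcon hf aemeasurable_const (g := fun _ => 1)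
    simp only [Pi.mul_apply, Pi.one_apply, mul_one, ENNReal.one_rpow, lintegral_const,
      one_mul] at this
    have hexp : 1 / (q / (q-1)) = 1 - 1/q := by field_simp
    rw [hexp] at this
    calc ∫⁻ a, f a ∂μ ≤ (∫⁻ a, f a ^ q ∂μ) ^ (1/q) * (μ univ) ^ (1 - 1/q) := this
    _ = _ := by ring

private lemma cube_eq (N : ℕ) (cc : EuclideanSpace ℝ (Fin N)) (ε : ℝ) :
    {z : EuclideanSpace ℝ (Fin N) | ∀ i, |z i - cc i| < ε / 2} =
      (MeasurableEquiv.toLp 2 (Fin N → ℝ)).symm ⁻¹'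
        (Set.pi Set.univ fun i => Ioo (cc i - ε/2) (cc i + ε/2)) := by
  ext z
  simp only [mem_setOf_eq, mem_preimage, Set.mem_pi, mem_univ, forall_true_left, mem_Ioo]
  refine forall_congr' fun i => ?_
  have hz : (MeasurableEquiv.toLp 2 (Fin N → ℝ)).symm z i = z i := rfl
  rw [hz, abs_lt]
  constructor
  · rintro ⟨h1, h2⟩; exact ⟨by linarith, by linarith⟩
  · rintro ⟨h1, h2⟩; exact ⟨by linarith, by linarith⟩

private lemma cube_meas (N : ℕ) (cc : EuclideanSpace ℝ (Fin N)) (ε : ℝ) :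
    MeasurableSet {z : EuclideanSpace ℝ (Fin N) | ∀ i, |z i - cc i| < ε / 2} := by
  rw [cube_eq]
  exact (MeasurableEquiv.toLp 2 (Fin N → ℝ)).symm.measurable
    (MeasurableSet.univ_pi fun i => measurableSet_Ioo)

private lemma cube_vol (N : ℕ) (cc : EuclideanSpace ℝ (Fin N)) (ε : ℝ) :
    volume {z : EuclideanSpace ℝ (Fin N) | ∀ i, |z i - cc i| < ε / 2} =
      ENNReal.ofReal ε ^ N := by
  rw [cube_eq, (EuclideanSpace.volume_preserving_symm_measurableEquiv_toLp (Fin N)).measure_preimage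
    ((MeasurableSet.univ_pi fun i => measurableSet_Ioo).nullMeasurableSet)]
  rw [Real.volume_pi_Ioo]
  have h : ∀ i : Fin N, ENNReal.ofReal (cc i + ε/2 - (cc i - ε/2)) = ENNReal.ofReal ε := by
    intro i; congr 1; ring
  rw [Finset.prod_congr rfl fun i _ => h i, Finset.prod_const, Finset.card_univ,
    Fintype.card_fin]

private lemma congr2 {α E : Type*} [MeasurableSpace α] {μ : Measure α} {ν : α → Measure α}
    {u g : α → E} (hug : u =ᵐ[μ] g) (hvg : ∀ x, u =ᵐ[ν x] g)
    (F : α → α → E → E → ℝ≥0∞) :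
    ∫⁻ x, ∫⁻ y, F x y (u x) (u y) ∂(ν x) ∂μ = ∫⁻ x, ∫⁻ y, F x y (g x) (g y) ∂(ν x) ∂μ := by
  refine lintegral_congr_ae (hug.mono fun x hx => ?_)
  dsimp only
  rw [hx]
  exact lintegral_congr_ae ((hvg x).mono fun y hy => by dsimp only; rw [hy])

private lemma const_calc (e s : ℝ≥0∞) (he0 : e ≠ 0) (het : e ≠ ⊤)
    (n q : ℝ) (hn : 0 ≤ n) (hq : 0 < q) :
    e ^ (n-1) * ((e^n)^(1-1/q) * ((e^n)^(1-1/q) * ((e*s)^(n+1))^(1/q))) * e^(-(2*n)) =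
      e ^ ((n-1)*(1-1/q)) * s^((n+1)*(1/q)) := by
  have hb : (0:ℝ) ≤ (n+1)*(1/q) := by positivity
  simp only [← ENNReal.rpow_mul]
  rw [ENNReal.mul_rpow_of_nonneg e s hb]
  rw [show e^(n-1) * (e^(n*(1-1/q)) * (e^(n*(1-1/q)) * (e^((n+1)*(1/q)) * s^((n+1)*(1/q))))) *
      e^(-(2*n)) =
      ((((e^(n-1) * e^(n*(1-1/q))) * e^(n*(1-1/q))) * e^((n+1)*(1/q))) * e^(-(2*n))) *
        s^((n+1)*(1/q)) from by ring]
  have hee : ∀ y z : ℝ, e ^ y * e ^ z = e ^ (y+z) :=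
    fun y z => (ENNReal.rpow_add y z he0 het).symm
  rw [hee, hee, hee, hee]
  congr 2
  field_simp
  ring

theorem stmt9 (N d m : ℕ) (q : ℝ) (hq : 1 ≤ q)
    (Ω : Set (EuclideanSpace ℝ (Fin N))) (hΩ : IsOpen Ω)
    (u : EuclideanSpace ℝ (Fin N) → EuclideanSpace ℝ (Fin d))
    (hu : MemLp u (ENNReal.ofReal q) (volume.restrict Ω))
    (ε : ℝ) (hε : 0 < ε)
    (c : Fin m → EuclideanSpace ℝ (Fin N))
    (hsub : ∀ j, {z : EuclideanSpace ℝ (Fin N) | ∀ i, |z i - c j i| < ε / 2} ⊆ Ω)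
    (hdisj : ∀ j k, j ≠ k →
      Disjoint {z : EuclideanSpace ℝ (Fin N) | ∀ i, |z i - c j i| < ε / 2}
        {z : EuclideanSpace ℝ (Fin N) | ∀ i, |z i - c k i| < ε / 2})
    (hm : (m : ℝ) ≤ ε ^ (-((N : ℝ) - 1))) :
    (∑ j : Fin m, ENNReal.ofReal (ε ^ ((N : ℝ) - 1)) *
        ((∫⁻ x in {z : EuclideanSpace ℝ (Fin N) | ∀ i, |z i - c j i| < ε / 2},
            ∫⁻ y in {z : EuclideanSpace ℝ (Fin N) | ∀ i, |z i - c j i| < ε / 2},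
              ENNReal.ofReal ‖u y - u x‖) /
          ENNReal.ofReal (ε ^ (2 * (N : ℝ))))) ≤
      ENNReal.ofReal ((N : ℝ) ^ (((N : ℝ) + 1) / (2 * q))) *
        (∫⁻ x in Ω, ∫⁻ y in Ω ∩ ball x (ε * Real.sqrt N),
            ENNReal.ofReal (‖u y - u x‖ ^ q) /
              (ENNReal.ofReal ((ε * Real.sqrt N) ^ (N : ℝ)) *
                ENNReal.ofReal (dist x y))) ^ (1 / q) := by
  classical
  rcases Nat.eq_zero_or_pos N with hN0 | hNpos
  · subst hN0
    haveI : Subsingleton (EuclideanSpace ℝ (Fin 0)) :=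
      ⟨fun a b => PiLp.ext fun i => i.elim0⟩
    have hzero : ∀ x y : EuclideanSpace ℝ (Fin 0), ENNReal.ofReal ‖u y - u x‖ = 0 := by
      intro x y
      have h : y = x := Subsingleton.elim _ _
      simp [h]
    simp only [hzero, lintegral_zero, ENNReal.zero_div, mul_zero, Finset.sum_const_zero]
    exact zero_le
  -- main case
  set Q : Fin m → Set (EuclideanSpace ℝ (Fin N)) :=
    fun j => {z | ∀ i, |z i - c j i| < ε / 2} with hQdef
  have hq0 : (0:ℝ) < q := lt_of_lt_of_le one_pos hq
  have hq0' : q ≠ 0 := hq0.ne'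
  have hiq : (0:ℝ) ≤ 1/q := by positivity
  have h1q : (0:ℝ) ≤ 1 - 1/q := by
    have h : 1/q ≤ 1 := by rw [div_le_one hq0]; exact hq
    linarith
  have hNR : (0:ℝ) < (N:ℝ) := by exact_mod_cast hNpos
  have hsN : (0:ℝ) < Real.sqrt N := Real.sqrt_pos.2 hNR
  have hεN : 0 < ε * Real.sqrt N := mul_pos hε hsN
  set e : ℝ≥0∞ := ENNReal.ofReal ε with he
  set s : ℝ≥0∞ := ENNReal.ofReal (Real.sqrt N) with hs
  have he0 : e ≠ 0 := (ENNReal.ofReal_pos.2 hε).ne'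
  have het : e ≠ ⊤ := ENNReal.ofReal_ne_top
  have hs0 : s ≠ 0 := (ENNReal.ofReal_pos.2 hsN).ne'
  have hst : s ≠ ⊤ := ENNReal.ofReal_ne_top
  have hes : ENNReal.ofReal (ε * Real.sqrt N) = e * s := ENNReal.ofReal_mul hε.le
  -- measurable representative
  obtain ⟨hmeas, -⟩ := hu
  set g := hmeas.mk u with hgdef
  have hgm : Measurable g := hmeas.stronglyMeasurable_mk.measurable
  have hug : u =ᵐ[volume.restrict Ω] g := hmeas.ae_eq_mk
  have hsubeq : ∀ t : Set (EuclideanSpace ℝ (Fin N)), t ⊆ Ω → u =ᵐ[volume.restrict t] g :=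
    fun t ht => hug.filter_mono (ae_mono (Measure.restrict_mono ht le_rfl))
  -- cube facts
  have hQmeas : ∀ j, MeasurableSet (Q j) := fun j => cube_meas N (c j) ε
  have hQvol : ∀ j, volume (Q j) = e ^ (N:ℝ) := by
    intro j
    rw [hQdef]
    rw [cube_vol N (c j) ε, ENNReal.rpow_natCast]
  have hQdist : ∀ j, ∀ x ∈ Q j, ∀ y ∈ Q j, dist x y < ε * Real.sqrt N := by
    intro j x hx y hy
    rw [EuclideanSpace.dist_eq]
    have hlt : ∀ i, dist (x i) (y i) ^ 2 < ε ^ 2 := by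
      intro i
      have h1 := hx i
      have h2 := hy i
      have habs : |x i - y i| < ε := by
        calc |x i - y i| ≤ |x i - c j i| + |c j i - y i| := abs_sub_le _ _ _
          _ = |x i - c j i| + |y i - c j i| := by rw [abs_sub_comm (c j i)]
          _ < ε/2 + ε/2 := add_lt_add h1 h2
          _ = ε := by ring
      have hd : dist (x i) (y i) = |x i - y i| := Real.dist_eq _ _
      rw [hd]
      exact pow_lt_pow_left₀ habs (abs_nonneg _) two_ne_zero
    have hsumlt : (∑ i, dist (x i) (y i) ^ 2) < (N:ℝ) * ε ^ 2 := by
      haveI : Nonempty (Fin N) := Fin.pos_iff_nonempty.mp hNpos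
      have hne : (Finset.univ : Finset (Fin N)).Nonempty := Finset.univ_nonempty
      calc (∑ i, dist (x i) (y i) ^ 2) < ∑ _i : Fin N, ε ^ 2 :=
            Finset.sum_lt_sum_of_nonempty hne fun i _ => hlt i
        _ = (N:ℝ) * ε ^ 2 := by
            rw [Finset.sum_const, Finset.card_univ, Fintype.card_fin, nsmul_eq_mul]
    calc Real.sqrt (∑ i, dist (x i) (y i) ^ 2) < Real.sqrt ((N:ℝ) * ε ^ 2) :=
          Real.sqrt_lt_sqrt (Finset.sum_nonneg fun i _ => sq_nonneg _) hsumlt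
      _ = ε * Real.sqrt N := by
          rw [Real.sqrt_mul hNR.le, Real.sqrt_sq hε.le, mul_comm]
  have hQball : ∀ j, ∀ x ∈ Q j, Q j ⊆ Ω ∩ ball x (ε * Real.sqrt N) := by
    intro j x hx y hy
    exact ⟨hsub j hy, by rw [mem_ball, dist_comm]; exact hQdist j x hx y hy⟩
  -- key constants
  set D : ℝ≥0∞ := ENNReal.ofReal ((ε * Real.sqrt N) ^ (N:ℝ)) with hD
  set K : ℝ≥0∞ := D * ENNReal.ofReal (ε * Real.sqrt N) with hK
  have hDes : D = (e*s)^(N:ℝ) := by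
    rw [hD, ← hes, ENNReal.ofReal_rpow_of_pos hεN]
  have hKes : K = (e*s) ^ ((N:ℝ)+1) := by
    rw [hK, hDes, hes, ENNReal.rpow_add _ _ (mul_ne_zero he0 hs0)
      (ENNReal.mul_ne_top het hst), ENNReal.rpow_one]
  have hK0 : K ≠ 0 := by
    rw [hK]
    exact mul_ne_zero (by rw [hD]; exact (ENNReal.ofReal_pos.2 (Real.rpow_pos_of_pos hεN _)).ne')
      ((ENNReal.ofReal_pos.2 hεN).ne')
  have hKt : K ≠ ⊤ := by
    rw [hK]; exact ENNReal.mul_ne_top (by rw [hD]; exact ENNReal.ofReal_ne_top)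
      ENNReal.ofReal_ne_top
  -- integrands
  set Gq : EuclideanSpace ℝ (Fin N) → EuclideanSpace ℝ (Fin N) → ℝ≥0∞ :=
    fun x y => ENNReal.ofReal (‖g y - g x‖ ^ q) with hGq
  have hGqm : Measurable (fun p : EuclideanSpace ℝ (Fin N) × EuclideanSpace ℝ (Fin N) =>
      Gq p.1 p.2) := by
    apply Measurable.ennreal_ofReal
    exact (Real.continuous_rpow_const hq0.le).measurable.comp
      ((hgm.comp measurable_snd).sub (hgm.comp measurable_fst)).norm
  set Ij : Fin m → ℝ≥0∞ := fun j => ∫⁻ x in Q j, ∫⁻ y in Ω ∩ ball x (ε * Real.sqrt N),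
    Gq x y / (D * ENNReal.ofReal (dist x y)) with hIj
  set R : ℝ≥0∞ := ENNReal.ofReal ((N : ℝ) ^ (((N : ℝ) + 1) / (2 * q))) with hR
  have hsval : s ^ (((N:ℝ)+1)*(1/q)) = R := by
    rw [hs, ENNReal.ofReal_rpow_of_pos hsN, hR]
    congr 1
    rw [Real.sqrt_eq_rpow, ← Real.rpow_mul hNR.le]
    congr 1
    field_simp
  -- the per-cube estimate
  have stepj : ∀ j : Fin m, ENNReal.ofReal (ε ^ ((N : ℝ) - 1)) *
      ((∫⁻ x in Q j, ∫⁻ y in Q j, ENNReal.ofReal ‖u y - u x‖) /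
        ENNReal.ofReal (ε ^ (2 * (N : ℝ)))) ≤
      (e ^ (((N:ℝ)-1)*(1-1/q)) * R) * Ij j ^ (1/q) := by
    intro j
    have hcongr : (∫⁻ x in Q j, ∫⁻ y in Q j, ENNReal.ofReal ‖u y - u x‖) =
        ∫⁻ x in Q j, ∫⁻ y in Q j, ENNReal.ofReal ‖g y - g x‖ :=
      congr2 (hsubeq _ (hsub j)) (fun _ => hsubeq _ (hsub j))
        (fun _ _ a b => ENNReal.ofReal ‖b - a‖)
    set F : EuclideanSpace ℝ (Fin N) → ℝ≥0∞ :=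
      fun x => (∫⁻ y in Q j, Gq x y) ^ (1/q) with hF
    have hFm : Measurable F := by
      apply ENNReal.continuous_rpow_const.measurable.comp
      exact Measurable.lintegral_prod_right' (ν := volume.restrict (Q j)) hGqm
    have hVfin : (e ^ (N:ℝ)) ^ (1 - 1/q) ≠ ⊤ :=
      ENNReal.rpow_ne_top_of_nonneg h1q (ENNReal.rpow_ne_top_of_nonneg (Nat.cast_nonneg N) het)
    have hinner : ∀ x, (∫⁻ y in Q j, ENNReal.ofReal ‖g y - g x‖) ≤
        (e ^ (N:ℝ)) ^ (1 - 1/q) * F x := by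
      intro x
      calc (∫⁻ y in Q j, ENNReal.ofReal ‖g y - g x‖)
          ≤ ((volume.restrict (Q j)) univ) ^ (1-1/q) *
            (∫⁻ y in Q j, (ENNReal.ofReal ‖g y - g x‖) ^ q) ^ (1/q) :=
            holder1 _ _ (((hgm.sub measurable_const).norm).ennreal_ofReal).aemeasurable q hq
        _ = (e ^ (N:ℝ)) ^ (1 - 1/q) * F x := by
            rw [Measure.restrict_apply_univ, hQvol j]
            have hh : (∫⁻ y in Q j, (ENNReal.ofReal ‖g y - g x‖) ^ q) =
                ∫⁻ y in Q j, Gq x y :=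
              lintegral_congr fun y =>
                ENNReal.ofReal_rpow_of_nonneg (norm_nonneg _) hq0.le
            rw [hh, hF]
    have hA : (∫⁻ x in Q j, ∫⁻ y in Q j, ENNReal.ofReal ‖g y - g x‖) ≤
        (e^(N:ℝ))^(1-1/q) * ((e^(N:ℝ))^(1-1/q) *
          (∫⁻ x in Q j, ∫⁻ y in Q j, Gq x y) ^ (1/q)) := by
      calc (∫⁻ x in Q j, ∫⁻ y in Q j, ENNReal.ofReal ‖g y - g x‖)
          ≤ ∫⁻ x in Q j, (e^(N:ℝ))^(1-1/q) * F x := lintegral_mono hinner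
        _ = (e^(N:ℝ))^(1-1/q) * ∫⁻ x in Q j, F x := lintegral_const_mul' _ _ hVfin
        _ ≤ (e^(N:ℝ))^(1-1/q) * (((volume.restrict (Q j)) univ)^(1-1/q) *
              (∫⁻ x in Q j, F x ^ q) ^ (1/q)) :=
            mul_le_mul_right (holder1 _ _ hFm.aemeasurable q hq) _
        _ = (e^(N:ℝ))^(1-1/q) * ((e^(N:ℝ))^(1-1/q) *
              (∫⁻ x in Q j, ∫⁻ y in Q j, Gq x y) ^ (1/q)) := by
            rw [Measure.restrict_apply_univ, hQvol j]
            have hh : (∫⁻ x in Q j, F x ^ q) = ∫⁻ x in Q j, ∫⁻ y in Q j, Gq x y := by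
              refine lintegral_congr fun x => ?_
              simp only [hF]
              rw [← ENNReal.rpow_mul, one_div_mul_cancel hq0', ENNReal.rpow_one]
            rw [hh]
    have hB : (∫⁻ x in Q j, ∫⁻ y in Q j, Gq x y) ≤ K * Ij j := by
      have hxstep : ∀ x ∈ Q j, (∫⁻ y in Q j, Gq x y) ≤
          K * ∫⁻ y in Ω ∩ ball x (ε * Real.sqrt N),
            Gq x y / (D * ENNReal.ofReal (dist x y)) := by
        intro x hx
        calc (∫⁻ y in Q j, Gq x y)
            ≤ ∫⁻ y in Q j, K * (Gq x y / (D * ENNReal.ofReal (dist x y))) := by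
              refine lintegral_mono_ae ((ae_restrict_mem (hQmeas j)).mono fun y hy => ?_)
              have hd : D * ENNReal.ofReal (dist x y) ≤ K := by
                rw [hK]
                exact mul_le_mul_right (ENNReal.ofReal_le_ofReal (hQdist j x hx y hy).le) D
              calc Gq x y = K * (Gq x y / K) := (ENNReal.mul_div_cancel' (fun h => absurd h hK0) (fun h => absurd h hKt)).symm
                _ ≤ K * (Gq x y / (D * ENNReal.ofReal (dist x y))) :=
                  mul_le_mul_right (ENNReal.div_le_div_left hd _) K
          _ = K * ∫⁻ y in Q j, Gq x y / (D * ENNReal.ofReal (dist x y)) :=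
              lintegral_const_mul' _ _ hKt
          _ ≤ K * ∫⁻ y in Ω ∩ ball x (ε * Real.sqrt N),
                Gq x y / (D * ENNReal.ofReal (dist x y)) :=
              mul_le_mul_right (lintegral_mono_set (hQball j x hx)) K
      calc (∫⁻ x in Q j, ∫⁻ y in Q j, Gq x y)
          ≤ ∫⁻ x in Q j, K * ∫⁻ y in Ω ∩ ball x (ε * Real.sqrt N),
              Gq x y / (D * ENNReal.ofReal (dist x y)) :=
            lintegral_mono_ae ((ae_restrict_mem (hQmeas j)).mono hxstep)
        _ = K * Ij j := lintegral_const_mul' _ _ hKt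
    calc ENNReal.ofReal (ε ^ ((N : ℝ) - 1)) *
        ((∫⁻ x in Q j, ∫⁻ y in Q j, ENNReal.ofReal ‖u y - u x‖) /
          ENNReal.ofReal (ε ^ (2 * (N : ℝ))))
        = e ^ ((N:ℝ)-1) * ((∫⁻ x in Q j, ∫⁻ y in Q j, ENNReal.ofReal ‖g y - g x‖) /
            e ^ (2 * (N:ℝ))) := by
          rw [hcongr, he, ENNReal.ofReal_rpow_of_pos hε, ENNReal.ofReal_rpow_of_pos hε]
      _ ≤ e ^ ((N:ℝ)-1) * (((e^(N:ℝ))^(1-1/q) * ((e^(N:ℝ))^(1-1/q) *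
            ((e*s)^((N:ℝ)+1) * Ij j)^(1/q))) / e^(2*(N:ℝ))) := by
          have h2 : (∫⁻ x in Q j, ∫⁻ y in Q j, Gq x y)^(1/q) ≤ ((e*s)^((N:ℝ)+1) * Ij j)^(1/q) := by
            rw [← hKes]
            exact ENNReal.rpow_le_rpow hB hiq
          have h3 := hA.trans (mul_le_mul_right (mul_le_mul_right h2 _) _)
          exact mul_le_mul_right (ENNReal.div_le_div_right h3 _) _
      _ = (e ^ (((N:ℝ)-1)) * ((e^(N:ℝ))^(1-1/q) * ((e^(N:ℝ))^(1-1/q) *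
            ((e*s)^((N:ℝ)+1))^(1/q))) * e^(-(2*(N:ℝ)))) * Ij j ^ (1/q) := by
          rw [ENNReal.mul_rpow_of_nonneg _ _ hiq, div_eq_mul_inv, ← ENNReal.rpow_neg]
          ring
      _ = (e ^ (((N:ℝ)-1)*(1-1/q)) * R) * Ij j ^ (1/q) := by
          rw [const_calc e s he0 het (N:ℝ) q (Nat.cast_nonneg N) hq0, hsval]
  -- sum the estimates
  have hsum2 : (∑ j : Fin m, Ij j ^ (1/q)) ≤
      (m : ℝ≥0∞) ^ (1-1/q) * (∑ j : Fin m, Ij j) ^ (1/q) := by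
    have h := holder1 (Measure.count : Measure (Fin m)) (fun j => Ij j ^ (1/q))
      (measurable_of_countable _).aemeasurable q hq
    have hcount : (Measure.count : Measure (Fin m)) univ = m := by
      rw [← Finset.coe_univ, Measure.count_apply_finset, Finset.card_univ, Fintype.card_fin]
    have hpw : ∀ j : Fin m, (Ij j ^ (1/q)) ^ q = Ij j := by
      intro j
      rw [← ENNReal.rpow_mul, one_div_mul_cancel hq0', ENNReal.rpow_one]
    rw [lintegral_count, lintegral_count, tsum_fintype, tsum_fintype, hcount] at h
    simpa only [hpw] using h
  have hm' : (m : ℝ≥0∞) ^ (1-1/q) ≤ e ^ (-(((N:ℝ)-1)*(1-1/q))) := by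
    have h1 : (m : ℝ≥0∞) ≤ e ^ (-((N:ℝ)-1)) := by
      rw [he, ENNReal.ofReal_rpow_of_pos hε, ← ENNReal.ofReal_natCast m]
      exact ENNReal.ofReal_le_ofReal hm
    calc (m : ℝ≥0∞) ^ (1-1/q) ≤ (e ^ (-((N:ℝ)-1))) ^ (1-1/q) := ENNReal.rpow_le_rpow h1 h1q
      _ = e ^ (-(((N:ℝ)-1)*(1-1/q))) := by
        rw [← ENNReal.rpow_mul]
        congr 1
        ring
  have hIsum : (∑ j : Fin m, Ij j) ≤ ∫⁻ x in Ω, ∫⁻ y in Ω ∩ ball x (ε * Real.sqrt N),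
      Gq x y / (D * ENNReal.ofReal (dist x y)) := by
    have hd : Set.PairwiseDisjoint ((Finset.univ : Finset (Fin m)) : Set (Fin m)) Q :=
      fun j _ k _ hjk => hdisj j k hjk
    calc (∑ j : Fin m, Ij j)
        = ∫⁻ x in ⋃ j ∈ (Finset.univ : Finset (Fin m)), Q j,
            ∫⁻ y in Ω ∩ ball x (ε * Real.sqrt N),
              Gq x y / (D * ENNReal.ofReal (dist x y)) :=
          (lintegral_biUnion_finset hd (fun j _ => hQmeas j) _).symm
      _ ≤ _ := lintegral_mono_set (iUnion₂_subset fun j _ => hsub j)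
  have hRHS : (∫⁻ x in Ω, ∫⁻ y in Ω ∩ ball x (ε * Real.sqrt N),
      Gq x y / (D * ENNReal.ofReal (dist x y))) =
      ∫⁻ x in Ω, ∫⁻ y in Ω ∩ ball x (ε * Real.sqrt N),
        ENNReal.ofReal (‖u y - u x‖ ^ q) / (D * ENNReal.ofReal (dist x y)) :=
    (congr2 hug (fun x => hsubeq _ inter_subset_left)
      (fun x y a b => ENNReal.ofReal (‖b - a‖ ^ q) / (D * ENNReal.ofReal (dist x y)))).symm
  calc (∑ j : Fin m, ENNReal.ofReal (ε ^ ((N : ℝ) - 1)) *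
        ((∫⁻ x in Q j, ∫⁻ y in Q j, ENNReal.ofReal ‖u y - u x‖) /
          ENNReal.ofReal (ε ^ (2 * (N : ℝ)))))
      ≤ ∑ j : Fin m, (e ^ (((N:ℝ)-1)*(1-1/q)) * R) * Ij j ^ (1/q) :=
        Finset.sum_le_sum fun j _ => stepj j
    _ = (e ^ (((N:ℝ)-1)*(1-1/q)) * R) * ∑ j : Fin m, Ij j ^ (1/q) := by
        rw [Finset.mul_sum]
    _ ≤ (e ^ (((N:ℝ)-1)*(1-1/q)) * R) *
        ((m : ℝ≥0∞) ^ (1-1/q) * (∑ j : Fin m, Ij j) ^ (1/q)) :=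
        mul_le_mul_right hsum2 _
    _ ≤ (e ^ (((N:ℝ)-1)*(1-1/q)) * R) *
        (e ^ (-(((N:ℝ)-1)*(1-1/q))) *
          (∫⁻ x in Ω, ∫⁻ y in Ω ∩ ball x (ε * Real.sqrt N),
            Gq x y / (D * ENNReal.ofReal (dist x y))) ^ (1/q)) :=
        mul_le_mul_right (mul_le_mul' hm' (ENNReal.rpow_le_rpow hIsum hiq)) _
    _ = R * (∫⁻ x in Ω, ∫⁻ y in Ω ∩ ball x (ε * Real.sqrt N),
          Gq x y / (D * ENNReal.ofReal (dist x y))) ^ (1/q) := by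
        have hone : e ^ (((N:ℝ)-1)*(1-1/q)) * e ^ (-(((N:ℝ)-1)*(1-1/q))) = 1 := by
          rw [← ENNReal.rpow_add _ _ he0 het, add_neg_cancel, ENNReal.rpow_zero]
        rw [mul_mul_mul_comm, hone, one_mul]
    _ = _ := by rw [hRHS]
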